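/- For a finite deterministic Markov decision process, stationary policies suffice: for every state x ∈ S, the minimum of v_π(x) over all stationary policies π : S → A equals the infimum of J(x, u) over all (possibly nonstationary) action sequences u : ℕ → A, and this infimum is attained. -/

import Mathlib

/-- Trajectory of a deterministic MDP: `x(0) = x₀` and `x(t+1) = f (x t) (u t)`. -/
def traj {S A : Type*} (f : S → A → S) (x0 : S) (u : ℕ → A) : ℕ → S
  | 0 => x0
  | t + 1 => f (traj f x0 u t) (u t)

/-- Discounted cost of an action sequence from an initial state. -/
noncomputable def Jcost {S A : Type*} (f : S → A → S) (g : S → A → ℝ) (lam : ℝ)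
    (x0 : S) (u : ℕ → A) : ℝ :=
  ∑' t : ℕ, lam ^ t * g (traj f x0 u t) (u t)


/-- Closed-loop trajectory under a stationary policy. -/
def ctraj {S A : Type*} (f : S → A → S) (pol : S → A) (x : S) : ℕ → S
  | 0 => x
  | t + 1 => f (ctraj f pol x t) (pol (ctraj f pol x t))

/-- Value function of a stationary policy. -/
noncomputable def vpi {S A : Type*} (f : S → A → S) (g : S → A → ℝ) (lam : ℝ)
    (pol : S → A) (x : S) : ℝ :=
  ∑' t : ℕ, lam ^ t * g (ctraj f pol x t) (pol (ctraj f pol x t))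

set_option linter.unusedSectionVars false

section Aux

lemma DMDPaux.abs_inf'_sub_inf'_le {ι : Type*} (s : Finset ι) (hs : s.Nonempty)
    (p q : ι → ℝ) (d : ℝ) (h : ∀ a ∈ s, |p a - q a| ≤ d) :
    |s.inf' hs p - s.inf' hs q| ≤ d := by
  rw [abs_sub_le_iff]
  constructor
  · obtain ⟨a, ha, hq⟩ := s.exists_mem_eq_inf' hs q
    have h1 : s.inf' hs p ≤ p a := Finset.inf'_le _ ha
    have h2 := abs_sub_le_iff.1 (h a ha)
    rw [hq]; linarith [h2.1]
  · obtain ⟨a, ha, hp⟩ := s.exists_mem_eq_inf' hs p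
    have h1 : s.inf' hs q ≤ q a := Finset.inf'_le _ ha
    have h2 := abs_sub_le_iff.1 (h a ha)
    rw [hp]; linarith [h2.2]

lemma DMDPaux.summable_disc {lam : ℝ} (h0 : 0 ≤ lam) (h1 : lam < 1) (c : ℕ → ℝ)
    (M : ℝ) (hc : ∀ t, |c t| ≤ M) :
    Summable fun t => lam ^ t * c t := by
  apply Summable.of_norm_bounded
    ((summable_geometric_of_lt_one h0 h1).mul_left M)
  intro t
  rw [Real.norm_eq_abs, abs_mul, abs_pow, abs_of_nonneg h0, mul_comm]
  exact mul_le_mul_of_nonneg_right (hc t) (pow_nonneg h0 t)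

lemma DMDPaux.tsum_disc_shift {lam : ℝ} (h0 : 0 ≤ lam) (h1 : lam < 1) (c : ℕ → ℝ)
    (M : ℝ) (hc : ∀ t, |c t| ≤ M) :
    ∑' t, lam ^ t * c t = c 0 + lam * ∑' t, lam ^ t * c (t + 1) := by
  rw [Summable.tsum_eq_zero_add (DMDPaux.summable_disc h0 h1 c M hc), ← tsum_mul_left]
  simp only [pow_zero, one_mul]
  congr 1
  exact tsum_congr fun t => by ring

variable {S A : Type*} [Fintype S] [Nonempty S] [Fintype A] [Nonempty A]
    (f : S → A → S) (g : S → A → ℝ) (lam : ℝ)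

/-- The Bellman operator. -/
noncomputable def DMDPaux.bell (v : S → ℝ) : S → ℝ :=
  fun x => Finset.univ.inf' Finset.univ_nonempty (fun a : A => g x a + lam * v (f x a))

lemma DMDPaux.bell_contracting (h0 : 0 ≤ lam) (h1 : lam < 1) :
    ContractingWith ⟨lam, h0⟩ (DMDPaux.bell f g lam) := by
  constructor
  · exact_mod_cast h1
  · apply LipschitzWith.of_dist_le_mul
    intro v w
    have hd : (0:ℝ) ≤ lam * dist v w := mul_nonneg h0 dist_nonneg
    show dist (DMDPaux.bell f g lam v) (DMDPaux.bell f g lam w) ≤ lam * dist v w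
    rw [dist_pi_le_iff hd]
    intro x
    rw [Real.dist_eq]
    apply DMDPaux.abs_inf'_sub_inf'_le
    intro a _
    have h2 : |(g x a + lam * v (f x a)) - (g x a + lam * w (f x a))|
        = lam * |v (f x a) - w (f x a)| := by
      rw [show (g x a + lam * v (f x a)) - (g x a + lam * w (f x a))
          = lam * (v (f x a) - w (f x a)) by ring, abs_mul, abs_of_nonneg h0]
    rw [h2]
    have h3 := dist_le_pi_dist v w (f x a)
    rw [Real.dist_eq] at h3
    exact mul_le_mul_of_nonneg_left h3 h0

lemma DMDPaux.ctraj_succ (pol : S → A) (x : S) (t : ℕ) :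
    ctraj f pol x (t + 1) = ctraj f pol (f x (pol x)) t := by
  induction t with
  | zero => rfl
  | succ n ih => rw [show ctraj f pol x (n+1+1) = f (ctraj f pol x (n+1)) (pol (ctraj f pol x (n+1))) from rfl, ih]; rfl

end Aux

theorem stationary_policies_suffice
    {S A : Type*} [Fintype S] [Nonempty S] [Fintype A] [Nonempty A]
    (f : S → A → S) (g : S → A → ℝ) (lam : ℝ) (hlam0 : 0 < lam) (hlam1 : lam < 1)
    (x : S) :
    (⨅ pol : S → A, vpi f g lam pol x) = (⨅ u : ℕ → A, Jcost f g lam x u) ∧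
    ∃ u : ℕ → A, Jcost f g lam x u = ⨅ u' : ℕ → A, Jcost f g lam x u' := by
  classical
  have h0 : (0:ℝ) ≤ lam := hlam0.le
  -- bound on g
  obtain ⟨M, hM⟩ := Finite.exists_le (fun p : S × A => |g p.1 p.2|)
  have hgM : ∀ y a, |g y a| ≤ M := fun y a => hM (y, a)
  -- summability facts
  have hsumJ : ∀ (y : S) (u : ℕ → A), Summable fun t => lam ^ t * g (traj f y u t) (u t) :=
    fun y u => DMDPaux.summable_disc h0 hlam1 _ M (fun t => hgM _ _)
  have hsumV : ∀ (pol : S → A) (y : S),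
      Summable fun t => lam ^ t * g (ctraj f pol y t) (pol (ctraj f pol y t)) :=
    fun pol y => DMDPaux.summable_disc h0 hlam1 _ M (fun t => hgM _ _)
  -- the optimal value function: fixed point of the Bellman operator
  set V : S → ℝ := (DMDPaux.bell_contracting f g lam h0 hlam1).fixedPoint with hVdef
  have hVfix : DMDPaux.bell f g lam V = V :=
    (DMDPaux.bell_contracting f g lam h0 hlam1).fixedPoint_isFixedPt
  have hVfix' : ∀ y : S, V y = DMDPaux.bell f g lam V y := fun y => (congrFun hVfix y).symm
  have hVle : ∀ (y : S) (a : A), V y ≤ g y a + lam * V (f y a) := by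
    intro y a
    rw [hVfix' y]
    exact Finset.inf'_le _ (Finset.mem_univ a)
  -- greedy policy
  have hgreedy : ∀ y : S, ∃ a : A, V y = g y a + lam * V (f y a) := by
    intro y
    obtain ⟨a, _, ha⟩ := Finset.exists_mem_eq_inf' (Finset.univ_nonempty)
      (fun a : A => g y a + lam * V (f y a))
    exact ⟨a, by rw [hVfix' y]; exact ha⟩
  choose pol hpol using hgreedy
  -- vpi equals Jcost of the induced open-loop sequence
  have htraj_eq : ∀ (q : S → A) (y : S) (t : ℕ),
      traj f y (fun t => q (ctraj f q y t)) t = ctraj f q y t := by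
    intro q y t
    induction t with
    | zero => rfl
    | succ n ih =>
      show f (traj f y _ n) (q (ctraj f q y n)) = _
      rw [ih]; rfl
  have hvpiJ : ∀ (q : S → A) (y : S),
      vpi f g lam q y = Jcost f g lam y (fun t => q (ctraj f q y t)) := by
    intro q y
    exact (tsum_congr fun t => by rw [htraj_eq q y t]).symm
  -- V ≤ Jcost for every u
  have hVleJ : ∀ u : ℕ → A, V x ≤ Jcost f g lam x u := by
    intro u
    have hstep : ∀ n : ℕ, V x ≤ (∑ t ∈ Finset.range n, lam ^ t * g (traj f x u t) (u t))
        + lam ^ n * V (traj f x u n) := by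
      intro n
      induction n with
      | zero => simp [traj]
      | succ n ih =>
        have h1 : V (traj f x u n) ≤ g (traj f x u n) (u n) + lam * V (traj f x u (n+1)) :=
          hVle _ _
        have h2 : lam ^ n * V (traj f x u n)
            ≤ lam ^ n * g (traj f x u n) (u n) + lam ^ (n+1) * V (traj f x u (n+1)) := by
          have := mul_le_mul_of_nonneg_left h1 (pow_nonneg h0 n)
          rw [mul_add] at this
          calc lam ^ n * V (traj f x u n)
              ≤ lam ^ n * g (traj f x u n) (u n) + lam ^ n * (lam * V (traj f x u (n+1))) := this
            _ = lam ^ n * g (traj f x u n) (u n) + lam ^ (n+1) * V (traj f x u (n+1)) := by ring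
        rw [Finset.sum_range_succ]
        linarith
    -- pass to the limit
    obtain ⟨VB, hVB⟩ := Finite.exists_le (fun y : S => |V y|)
    have htend1 : Filter.Tendsto (fun n => ∑ t ∈ Finset.range n, lam ^ t * g (traj f x u t) (u t))
        Filter.atTop (nhds (Jcost f g lam x u)) := (hsumJ x u).hasSum.tendsto_sum_nat
    have htend2 : Filter.Tendsto (fun n : ℕ => lam ^ n * V (traj f x u n))
        Filter.atTop (nhds 0) := by
      have hb : ∀ n : ℕ, ‖lam ^ n * V (traj f x u n)‖ ≤ VB * lam ^ n := by
        intro n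
        rw [Real.norm_eq_abs, abs_mul, abs_pow, abs_of_nonneg h0, mul_comm]
        exact mul_le_mul_of_nonneg_right (hVB _) (pow_nonneg h0 n)
      have ht : Filter.Tendsto (fun n : ℕ => VB * lam ^ n) Filter.atTop (nhds 0) := by
        rw [show (0:ℝ) = VB * 0 by ring]
        exact (tendsto_pow_atTop_nhds_zero_of_lt_one h0 hlam1).const_mul VB
      exact squeeze_zero_norm hb ht
    have htend : Filter.Tendsto
        (fun n => (∑ t ∈ Finset.range n, lam ^ t * g (traj f x u t) (u t))
          + lam ^ n * V (traj f x u n)) Filter.atTop (nhds (Jcost f g lam x u)) := by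
      have := htend1.add htend2
      simpa using this
    exact ge_of_tendsto' htend hstep
  -- recursion for vpi
  have hvpirec : ∀ (q : S → A) (y : S),
      vpi f g lam q y = g y (q y) + lam * vpi f g lam q (f y (q y)) := by
    intro q y
    have := DMDPaux.tsum_disc_shift h0 hlam1
      (fun t => g (ctraj f q y t) (q (ctraj f q y t))) M (fun t => hgM _ _)
    rw [vpi, this]
    congr 1
    congr 1
    apply tsum_congr
    intro t
    rw [DMDPaux.ctraj_succ f q y t]
  -- greedy policy achieves V
  have hpolV : ∀ y : S, vpi f g lam pol y = V y := by
    set d : S → ℝ := fun y => vpi f g lam pol y - V y with hd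
    have hdrec : ∀ y, d y = lam * d (f y (pol y)) := by
      intro y
      simp only [hd]
      rw [hvpirec pol y, hpol y]
      ring
    have hiter : ∀ (n : ℕ) (y : S), d y = lam ^ n * d (ctraj f pol y n) := by
      intro n
      induction n with
      | zero => intro y; simp [ctraj]
      | succ n ih =>
        intro y
        rw [hdrec y, ih (f y (pol y)), ← DMDPaux.ctraj_succ f pol y n]
        ring
    obtain ⟨D, hD⟩ := Finite.exists_le (fun y : S => |d y|)
    intro y
    have habs : ∀ n : ℕ, |d y| ≤ lam ^ n * D := by
      intro n
      rw [hiter n y, abs_mul, abs_pow, abs_of_nonneg h0]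
      exact mul_le_mul_of_nonneg_left (hD _) (pow_nonneg h0 n)
    have ht : Filter.Tendsto (fun n : ℕ => lam ^ n * D) Filter.atTop (nhds 0) := by
      rw [show (0:ℝ) = 0 * D by ring]
      exact (tendsto_pow_atTop_nhds_zero_of_lt_one h0 hlam1).mul_const D
    have : |d y| ≤ 0 := ge_of_tendsto' ht habs
    have : d y = 0 := abs_nonpos_iff.mp this
    simpa [hd, sub_eq_zero] using this
  -- conclude
  have hbddJ : BddBelow (Set.range fun u : ℕ → A => Jcost f g lam x u) := by
    refine ⟨V x, ?_⟩
    rintro _ ⟨u, rfl⟩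
    exact hVleJ u
  have hustar : Jcost f g lam x (fun t => pol (ctraj f pol x t)) = V x := by
    rw [← hvpiJ pol x, hpolV x]
  have hinfJ : (⨅ u : ℕ → A, Jcost f g lam x u) = V x := by
    apply le_antisymm
    · calc (⨅ u : ℕ → A, Jcost f g lam x u) ≤ Jcost f g lam x (fun t => pol (ctraj f pol x t)) :=
        ciInf_le hbddJ _
      _ = V x := hustar
    · exact le_ciInf hVleJ
  have hVlevpi : ∀ q : S → A, V x ≤ vpi f g lam q x := by
    intro q
    rw [hvpiJ q x]
    exact hVleJ _
  have hbddP : BddBelow (Set.range fun q : S → A => vpi f g lam q x) := by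
    refine ⟨V x, ?_⟩
    rintro _ ⟨q, rfl⟩
    exact hVlevpi q
  have hinfP : (⨅ q : S → A, vpi f g lam q x) = V x := by
    apply le_antisymm
    · calc (⨅ q : S → A, vpi f g lam q x) ≤ vpi f g lam pol x := ciInf_le hbddP pol
      _ = V x := hpolV x
    · exact le_ciInf hVlevpi
  refine ⟨by rw [hinfP, hinfJ], ⟨fun t => pol (ctraj f pol x t), by rw [hustar, hinfJ]⟩⟩
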